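/- Let q be an odd prime power, k = 𝔽_q, ψ : k → ℂ^× an additive character, f : (k^×)^n → k any function, M ∈ M_n(ℤ) with 2ℤ^n ⊆ Mℤ^n, E as above, and φ_M : (k^×)^n → (k^×)^n the induced homomorphism. Then Σ_{x ∈ (k^×)^n} ψ(f(φ_M(x))) = Σ_{ε ∈ E} Σ_{x ∈ (k^×)^n} ψ(f(x)) χ₂^ε(x). -/

import Mathlib

open scoped BigOperators Classical

/- ### Auxiliary lemmas -/

private lemma sqeq15 (x : ℂ) (h : x ^ 2 = 1) : x = 1 ∨ x = -1 := by
  have h2 : (x - 1) * (x + 1) = 0 := by linear_combination h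
  rcases mul_eq_zero.mp h2 with h | h
  · left; linear_combination h
  · right; linear_combination h

private lemma fin2_add_cancel15 : ∀ b c : Fin 2, b + (b + c) = c := by decide

private lemma prod_zpow_sum15 {G : Type*} [CommGroup G] (c : G) {ι : Type*} (s : Finset ι)
    (m : ι → ℤ) : ∏ j ∈ s, c ^ m j = c ^ (∑ j ∈ s, m j) := by
  induction s using Finset.cons_induction with
  | empty => simp
  | cons a s ha ih => rw [Finset.prod_cons, Finset.sum_cons, ih, zpow_add]

private lemma prod_zpow_sum015 {G₀ : Type*} [CommGroupWithZero G₀] (c : G₀) (hc : c ≠ 0)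
    {ι : Type*} (s : Finset ι) (m : ι → ℤ) :
    ∏ j ∈ s, c ^ m j = c ^ (∑ j ∈ s, m j) := by
  induction s using Finset.cons_induction with
  | empty => simp
  | cons a s ha ih => rw [Finset.prod_cons, Finset.sum_cons, ih, zpow_add₀ hc]

private lemma dvd_mulVec_congr15 {n : ℕ} (M : Matrix (Fin n) (Fin n) ℤ) (v v' : Fin n → ℤ)
    (h : ∀ i, (2:ℤ) ∣ (v i - v' i)) (j : Fin n) :
    (2:ℤ) ∣ (M.mulVec v j - M.mulVec v' j) := by
  simp only [Matrix.mulVec, dotProduct]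
  rw [← Finset.sum_sub_distrib]
  refine Finset.dvd_sum fun i _ => ?_
  rcases h i with ⟨c, hc⟩
  exact ⟨M j i * c, by linear_combination M j i * hc⟩

private lemma parity_extend15 {n : ℕ} (M : Matrix (Fin n) (Fin n) ℤ) (a : Fin n → ℤ)
    (hpar : ∀ ε : Fin n → Fin 2,
      (∀ j, (2 : ℤ) ∣ M.mulVec (fun i => ((ε i : ℕ) : ℤ)) j) →
      (2:ℤ) ∣ ∑ i, ((ε i : ℕ) : ℤ) * a i)
    (w : Fin n → ℤ) (hw : ∀ j, (2:ℤ) ∣ M.mulVec w j) :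
    (2:ℤ) ∣ ∑ i, w i * a i := by
  classical
  set ε : Fin n → Fin 2 := fun i => if (2:ℤ) ∣ w i then 0 else 1 with hε
  have hcong : ∀ i, (2:ℤ) ∣ (w i - ((ε i : ℕ) : ℤ)) := by
    intro i
    by_cases h : (2:ℤ) ∣ w i
    · simp [hε, h]
    · simp only [hε, h, if_false]
      omega
  have hMε : ∀ j, (2:ℤ) ∣ M.mulVec (fun i => ((ε i : ℕ) : ℤ)) j := by
    intro j
    have h2 := dvd_mulVec_congr15 M w (fun i => ((ε i : ℕ) : ℤ)) hcong j
    have h1 := hw j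
    omega
  have hd := hpar ε hMε
  have : (2:ℤ) ∣ (∑ i, w i * a i - ∑ i, ((ε i : ℕ) : ℤ) * a i) := by
    rw [← Finset.sum_sub_distrib]
    refine Finset.dvd_sum fun i _ => ?_
    rcases hcong i with ⟨c, hc⟩
    exact ⟨c * a i, by linear_combination a i * hc⟩
  omega

private lemma key_surj15 {n : ℕ} (M : Matrix (Fin n) (Fin n) ℤ)
    (hN : ∀ v : Fin n → ℤ, (2 : ℤ) • v ∈ LinearMap.range M.mulVecLin)
    (a : Fin n → ℤ)
    (hpar : ∀ ε : Fin n → Fin 2,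
      (∀ j, (2 : ℤ) ∣ M.mulVec (fun i => ((ε i : ℕ) : ℤ)) j) →
      (2:ℤ) ∣ ∑ i, ((ε i : ℕ) : ℤ) * a i) :
    ∃ u : Fin n → ℤ, ∀ i, ∑ j, u j * M j i = a i := by
  classical
  have hw : ∀ j : Fin n, ∃ w : Fin n → ℤ, M.mulVec w = (2:ℤ) • Pi.single j 1 := by
    intro j
    obtain ⟨w, hw⟩ := hN (Pi.single j 1)
    exact ⟨w, by simpa [Matrix.mulVecLin_apply] using hw⟩
  choose w hwspec using hw
  set A : Matrix (Fin n) (Fin n) ℤ := Matrix.of (fun i j => w j i) with hA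
  have hMA : M * A = (2:ℤ) • 1 := by
    ext i j
    have := congrFun (hwspec j) i
    simp only [Matrix.mulVec, dotProduct] at this
    simp only [Matrix.mul_apply, hA, Matrix.smul_apply, Matrix.one_apply, Matrix.of_apply]
    rw [this]
    by_cases h : i = j <;> simp [h, Pi.single_apply, eq_comm]
  have hAM : A * M = (2:ℤ) • 1 := by
    have hinj : Function.Injective ((Int.cast : ℤ → ℚ)) := Int.cast_injective
    set Fm := (Int.castRingHom ℚ).mapMatrix (m := Fin n) with hFm
    have hmapinj : Function.Injective Fm := fun B C h => by
      ext i j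
      have := congrFun (congrFun (congrArg (fun X : Matrix (Fin n) (Fin n) ℚ => X) h) i) j
      simp only [hFm, RingHom.mapMatrix_apply, Matrix.map_apply] at this
      exact hinj this
    apply hmapinj
    have h20 : Fm ((2:ℤ) • 1) = (2:ℚ) • 1 := by
      ext i j
      simp only [hFm, RingHom.mapMatrix_apply, Matrix.map_apply, Matrix.smul_apply,
        Matrix.one_apply]
      by_cases h : i = j <;> simp [h]
    have hMAq : Fm M * Fm A = (2:ℚ) • 1 := by
      rw [← map_mul, hMA, h20]
    have h1 : Fm M * ((2:ℚ)⁻¹ • Fm A) = 1 := by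
      rw [Matrix.mul_smul, hMAq, smul_smul]; norm_num
    have h2 := mul_eq_one_comm.mp h1
    rw [Matrix.smul_mul] at h2
    rw [map_mul, h20]
    have h3 := congrArg (fun B : Matrix (Fin n) (Fin n) ℚ => (2:ℚ) • B) h2
    simpa [smul_smul] using h3
  have hcol : ∀ j, (2:ℤ) ∣ ∑ i, w j i * a i := by
    intro j
    refine parity_extend15 M a hpar (w j) (fun j' => ?_)
    rw [hwspec j]
    by_cases h : j' = j <;> simp [h, Pi.single_apply]
  choose u hu using fun j => (hcol j)
  refine ⟨u, fun i => ?_⟩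
  have h2 : (2:ℤ) * (∑ j, u j * M j i) = 2 * a i := by
    calc (2:ℤ) * (∑ j, u j * M j i)
        = ∑ j, 2 * u j * M j i := by
          rw [Finset.mul_sum]; exact Finset.sum_congr rfl (fun j _ => by ring)
      _ = ∑ j, ∑ l, w j l * a l * M j i := by
          refine Finset.sum_congr rfl (fun j _ => ?_)
          rw [← Finset.sum_mul, ← hu j]
      _ = ∑ l, ∑ j, w j l * a l * M j i := Finset.sum_comm
      _ = ∑ l, ((A * M) l i) * a l := by
          refine Finset.sum_congr rfl (fun l _ => ?_)
          rw [Matrix.mul_apply, Finset.sum_mul]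
          refine Finset.sum_congr rfl (fun j _ => ?_)
          simp only [hA, Matrix.of_apply]
          ring
      _ = 2 * a i := by
          rw [hAM, Finset.sum_eq_single i]
          · simp
          · intro b _ hb
            simp [Matrix.smul_apply, Matrix.one_apply_ne hb]
          · simp
  exact mul_left_cancel₀ two_ne_zero h2

section ChiFacts
variable {G : Type*} [CommGroup G] (χ₂ : G →* ℂˣ) (hχ₂ : orderOf χ₂ = 2)
include hχ₂

private lemma chi_sq_units15 (u : G) : (χ₂ u) ^ 2 = 1 := by
  have h : χ₂ ^ 2 = 1 := by rw [← hχ₂]; exact pow_orderOf_eq_one χ₂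
  have := congrArg (fun φ : G →* ℂˣ => φ u) h
  simpa [sq, MonoidHom.mul_apply] using this

private lemma chi_sq15 (u : G) : ((χ₂ u : ℂˣ) : ℂ) ^ 2 = 1 := by
  have := congrArg (Units.val) (chi_sq_units15 χ₂ hχ₂ u)
  simpa [sq] using this

private lemma chi_pm15 (u : G) : ((χ₂ u : ℂˣ) : ℂ) = 1 ∨ ((χ₂ u : ℂˣ) : ℂ) = -1 :=
  sqeq15 _ (chi_sq15 χ₂ hχ₂ u)

private lemma chi_exists_neg_one15 : ∃ u : G, ((χ₂ u : ℂˣ) : ℂ) = -1 := by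
  have hne : χ₂ ≠ 1 := by
    intro h; rw [h] at hχ₂; simp at hχ₂
  have : ∃ u, χ₂ u ≠ 1 := by
    by_contra h; push_neg at h; exact hne (MonoidHom.ext fun u => h u)
  obtain ⟨u, hu⟩ := this
  refine ⟨u, ?_⟩
  rcases chi_pm15 χ₂ hχ₂ u with h | h
  · exact absurd (Units.ext h) hu
  · exact h

private lemma chi_sum_zero15 [Fintype G] : ∑ u : G, ((χ₂ u : ℂˣ) : ℂ) = 0 := by
  obtain ⟨v, hv⟩ := chi_exists_neg_one15 χ₂ hχ₂
  have hb : Function.Bijective (fun u : G => v * u) := Group.mulLeft_bijective v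
  have h := Fintype.sum_bijective _ hb (fun u => ((χ₂ (v * u) : ℂˣ) : ℂ))
      (fun u => ((χ₂ u : ℂˣ) : ℂ)) (fun u => rfl)
  have h2 : ∑ u : G, ((χ₂ (v * u) : ℂˣ) : ℂ) = - ∑ u : G, ((χ₂ u : ℂˣ) : ℂ) := by
    rw [← Finset.sum_neg_distrib]
    refine Finset.sum_congr rfl fun u _ => ?_
    rw [map_mul]
    push_cast
    rw [hv]; ring
  rw [h2] at h
  have h3 : (2 : ℂ) * ∑ u : G, ((χ₂ u : ℂˣ) : ℂ) = 0 := by linear_combination - h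
  rcases mul_eq_zero.mp h3 with h4 | h4
  · exact absurd h4 two_ne_zero
  · exact h4

end ChiFacts

/- ### Statement definitions -/

/-- `φ_M(x)`: the tuple with `i`-th entry `∏_j x_j ^ m_{ji}`. -/
noncomputable def phiMfun {k : Type*} [Field k] {n : ℕ}
    (M : Matrix (Fin n) (Fin n) ℤ) (x : Fin n → kˣ) : Fin n → kˣ :=
  fun i => ∏ j, x j ^ M j i

/-- `E` as a finset of `{0,1}^n` (represented by `Fin n → Fin 2`): the lift of
the kernel of `M mod 2` on `𝔽₂^n`. -/
noncomputable def Efin {n : ℕ} (M : Matrix (Fin n) (Fin n) ℤ) :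
    Finset (Fin n → Fin 2) :=
  Finset.univ.filter fun ε =>
    ∀ j, (2 : ℤ) ∣ M.mulVec (fun i => ((ε i : ℕ) : ℤ)) j

section Main
variable {k : Type*} [Field k] [Fintype k] [DecidableEq k] {n : ℕ}
  (M : Matrix (Fin n) (Fin n) ℤ) (χ₂ : kˣ →* ℂˣ)

private lemma hE015 : (0 : Fin n → Fin 2) ∈ Efin M := by
  simp only [Efin, Finset.mem_filter, Finset.mem_univ, true_and]
  intro j
  have hz : (fun i : Fin n => (((0 : Fin n → Fin 2) i : ℕ) : ℤ)) = 0 := by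
    funext i; simp
  rw [hz, Matrix.mulVec_zero]
  exact dvd_zero _

private lemma hEadd15 : ∀ ε₀ ∈ Efin M, ∀ ε ∈ Efin M, ε₀ + ε ∈ Efin M := by
  intro ε₀ h0 ε h
  simp only [Efin, Finset.mem_filter, Finset.mem_univ, true_and] at h0 h ⊢
  intro j
  have hcong : ∀ i, (2:ℤ) ∣ ((((ε₀ + ε) i : Fin 2) : ℕ) : ℤ)
      - ((fun i => (((ε₀ i : Fin 2) : ℕ) : ℤ)) i + (fun i => (((ε i : Fin 2) : ℕ) : ℤ)) i) := by
    intro i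
    have hva : ((ε₀ i + ε i : Fin 2) : ℕ) = ((ε₀ i : ℕ) + (ε i : ℕ)) % 2 := rfl
    simp only [Pi.add_apply, hva]
    push_cast
    omega
  have hd := dvd_mulVec_congr15 M _ _ hcong j
  have hadd : M.mulVec (fun i => (fun i => (((ε₀ i : Fin 2) : ℕ) : ℤ)) i
      + (fun i => (((ε i : Fin 2) : ℕ) : ℤ)) i) j
      = M.mulVec (fun i => (((ε₀ i : Fin 2) : ℕ) : ℤ)) j
        + M.mulVec (fun i => (((ε i : Fin 2) : ℕ) : ℤ)) j := by
    simp [Matrix.mulVec, dotProduct, mul_add, Finset.sum_add_distrib]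
  rw [hadd] at hd
  have h1 := h0 j
  have h2 := h j
  omega

variable (hχ₂ : orderOf χ₂ = 2)
include hχ₂

private lemma htpm15 (x : Fin n → kˣ) (ε : Fin n → Fin 2) :
    (∏ i, ((χ₂ (x i) : ℂˣ) : ℂ) ^ ((ε i : ℕ))) = 1 ∨
    (∏ i, ((χ₂ (x i) : ℂˣ) : ℂ) ^ ((ε i : ℕ))) = -1 := by
  refine sqeq15 _ ?_
  rw [← Finset.prod_pow]
  refine Finset.prod_eq_one fun i _ => ?_
  rw [← pow_mul, mul_comm, pow_mul, chi_sq15 χ₂ hχ₂ (x i), one_pow]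

private lemma htmul15 (x : Fin n → kˣ) (ε₀ ε : Fin n → Fin 2) :
    (∏ i, ((χ₂ (x i) : ℂˣ) : ℂ) ^ (((ε₀ + ε) i : ℕ))) =
      (∏ i, ((χ₂ (x i) : ℂˣ) : ℂ) ^ ((ε₀ i : ℕ))) *
      (∏ i, ((χ₂ (x i) : ℂˣ) : ℂ) ^ ((ε i : ℕ))) := by
  have hpow2 : ∀ (v : ℂ), v ^ 2 = 1 → ∀ b c : Fin 2,
      v ^ (((b + c : Fin 2)) : ℕ) = v ^ ((b : ℕ)) * v ^ ((c : ℕ)) := by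
    intro v hv b c
    fin_cases b <;> fin_cases c <;>
      simp_all [pow_succ] <;> ring_nf <;> simp_all [sq]
  rw [← Finset.prod_mul_distrib]
  exact Finset.prod_congr rfl fun i _ =>
    hpow2 _ (chi_sq15 χ₂ hχ₂ (x i)) (ε₀ i) (ε i)

private lemma himage115 (z : Fin n → kˣ) (ε : Fin n → Fin 2) (hε : ε ∈ Efin M) :
    (∏ i, ((χ₂ ((phiMfun M z) i) : ℂˣ) : ℂ) ^ ((ε i : ℕ))) = 1 := by
  simp only [Efin, Finset.mem_filter, Finset.mem_univ, true_and] at hε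
  have hu : (∏ i, (χ₂ ((phiMfun M z) i)) ^ ((ε i : ℕ))) = 1 := by
    have hstep : ∀ i, (χ₂ ((phiMfun M z) i)) ^ ((ε i : ℕ))
        = ∏ j, (χ₂ (z j)) ^ (M j i * ((ε i : ℕ) : ℤ)) := by
      intro i
      simp only [phiMfun]
      rw [map_prod, ← Finset.prod_pow]
      refine Finset.prod_congr rfl fun j _ => ?_
      rw [map_zpow, ← zpow_natCast ((χ₂ (z j)) ^ (M j i)) ((ε i : ℕ)), ← zpow_mul]
    calc (∏ i, (χ₂ ((phiMfun M z) i)) ^ ((ε i : ℕ)))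
        = ∏ i, ∏ j, (χ₂ (z j)) ^ (M j i * ((ε i : ℕ) : ℤ)) :=
          Finset.prod_congr rfl fun i _ => hstep i
      _ = ∏ j, ∏ i, (χ₂ (z j)) ^ (M j i * ((ε i : ℕ) : ℤ)) := Finset.prod_comm
      _ = ∏ j, (χ₂ (z j)) ^ (∑ i, M j i * ((ε i : ℕ) : ℤ)) :=
          Finset.prod_congr rfl fun j _ => prod_zpow_sum15 _ _ _
      _ = 1 := by
          refine Finset.prod_eq_one fun j _ => ?_
          obtain ⟨c, hc⟩ := hε j
          have hexp : (∑ i, M j i * ((ε i : ℕ) : ℤ)) = 2 * c := by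
            rw [← hc]
            simp [Matrix.mulVec, dotProduct]
          rw [hexp, zpow_mul]
          norm_cast
          rw [chi_sq_units15 χ₂ hχ₂ (z j), one_zpow]
  calc (∏ i, ((χ₂ ((phiMfun M z) i) : ℂˣ) : ℂ) ^ ((ε i : ℕ)))
      = ((∏ i, (χ₂ ((phiMfun M z) i)) ^ ((ε i : ℕ)) : ℂˣ) : ℂ) := by
        rw [Units.coe_prod]
        exact Finset.prod_congr rfl fun i _ => by push_cast; rfl
    _ = 1 := by rw [hu]; rfl

set_option maxHeartbeats 1000000 in
private lemma hsurj15
    (hN : ∀ v : Fin n → ℤ, (2 : ℤ) • v ∈ LinearMap.range M.mulVecLin)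
    (x : Fin n → kˣ)
    (hx : ∀ ε ∈ Efin M, (∏ i, ((χ₂ (x i) : ℂˣ) : ℂ) ^ ((ε i : ℕ))) = 1) :
    ∃ z, phiMfun M z = x := by
  obtain ⟨g, hg⟩ := IsCyclic.exists_generator (α := kˣ)
  have hgen : ∀ u : kˣ, ∃ a : ℤ, g ^ a = u := by
    intro u
    have := hg u
    rwa [Subgroup.mem_zpowers_iff] at this
  choose a ha using fun i => hgen (x i)
  have hχg : ((χ₂ g : ℂˣ) : ℂ) = -1 := by
    rcases chi_pm15 χ₂ hχ₂ g with h | h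
    · exfalso
      have hone : χ₂ = 1 := by
        ext u
        obtain ⟨b, hb⟩ := hgen u
        rw [← hb, map_zpow]
        have hg1 : χ₂ g = 1 := Units.ext h
        rw [hg1, one_zpow]
        rfl
      rw [hone] at hχ₂; simp at hχ₂
    · exact h
  have hpar : ∀ ε : Fin n → Fin 2,
      (∀ j, (2 : ℤ) ∣ M.mulVec (fun i => ((ε i : ℕ) : ℤ)) j) →
      (2:ℤ) ∣ ∑ i, ((ε i : ℕ) : ℤ) * a i := by
    intro ε hε
    have hεE : ε ∈ Efin M := by
      simp only [Efin, Finset.mem_filter, Finset.mem_univ, true_and]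
      exact hε
    have h1 : (∏ i, ((χ₂ (x i) : ℂˣ) : ℂ) ^ ((ε i : ℕ))) = 1 := hx ε hεE
    have h2 : (∏ i, ((χ₂ (x i) : ℂˣ) : ℂ) ^ ((ε i : ℕ)))
        = (-1 : ℂ) ^ (∑ i, ((ε i : ℕ) : ℤ) * a i) := by
      calc (∏ i, ((χ₂ (x i) : ℂˣ) : ℂ) ^ ((ε i : ℕ)))
          = ∏ i, (-1 : ℂ) ^ (((ε i : ℕ) : ℤ) * a i) := by
            refine Finset.prod_congr rfl fun i _ => ?_
            rw [← ha i, map_zpow]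
            push_cast
            rw [hχg]
            rw [← zpow_natCast ((-1 : ℂ) ^ (a i)) ((ε i : ℕ)), ← zpow_mul]
            rw [mul_comm]
        _ = (-1 : ℂ) ^ (∑ i, ((ε i : ℕ) : ℤ) * a i) :=
            prod_zpow_sum015 (-1 : ℂ) (by norm_num) Finset.univ _
    rw [h2] at h1
    by_contra hodd2
    have hoddsum : Odd (∑ i, ((ε i : ℕ) : ℤ) * a i) :=
      Int.not_even_iff_odd.mp (fun he => hodd2 (even_iff_two_dvd.mp he))
    rw [hoddsum.neg_one_zpow] at h1
    norm_num at h1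
  obtain ⟨u, hu⟩ := key_surj15 M hN a hpar
  refine ⟨fun j => g ^ u j, ?_⟩
  funext i
  simp only [phiMfun]
  calc (∏ j, (g ^ u j) ^ M j i)
      = ∏ j, g ^ (u j * M j i) := by
        refine Finset.prod_congr rfl fun j _ => ?_
        rw [← zpow_mul]
    _ = g ^ (∑ j, u j * M j i) := prod_zpow_sum15 _ _ _
    _ = x i := by rw [hu i, ha i]

private lemma hSzero15 (x : Fin n → kˣ) (ε₀ : Fin n → Fin 2) (hε₀ : ε₀ ∈ Efin M)
    (hval : (∏ i, ((χ₂ (x i) : ℂˣ) : ℂ) ^ ((ε₀ i : ℕ))) = -1) :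
    ∑ ε ∈ Efin M, (∏ i, ((χ₂ (x i) : ℂˣ) : ℂ) ^ ((ε i : ℕ))) = 0 := by
  classical
  set T : (Fin n → Fin 2) → ℂ := fun ε => ∏ i, ((χ₂ (x i) : ℂˣ) : ℂ) ^ ((ε i : ℕ)) with hT
  have hswap : ∑ ε ∈ Efin M, T ε = ∑ ε ∈ Efin M, T (ε₀ + ε) := by
    refine (Finset.sum_nbij' (fun ε => ε₀ + ε) (fun ε => ε₀ + ε) ?_ ?_ ?_ ?_ ?_).symm
    · intro ε hε; exact hEadd15 M ε₀ hε₀ ε hε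
    · intro ε hε; exact hEadd15 M ε₀ hε₀ ε hε
    · intro ε _; funext i
      simp only [Pi.add_apply]
      exact fin2_add_cancel15 (ε₀ i) (ε i)
    · intro ε _; funext i
      simp only [Pi.add_apply]
      exact fin2_add_cancel15 (ε₀ i) (ε i)
    · intro ε _; rfl
  have h2 : ∑ ε ∈ Efin M, T (ε₀ + ε) = - ∑ ε ∈ Efin M, T ε := by
    rw [← Finset.sum_neg_distrib]
    refine Finset.sum_congr rfl fun ε _ => ?_
    rw [hT]
    simp only []
    rw [htmul15 χ₂ hχ₂ x ε₀ ε, hval]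
    ring
  have h3 : (2 : ℂ) * ∑ ε ∈ Efin M, T ε = 0 := by
    have h4 := hswap.trans h2
    linear_combination h4
  rcases mul_eq_zero.mp h3 with h4 | h4
  · exact absurd h4 two_ne_zero
  · exact h4

end Main

theorem stmt15 {k : Type*} [Field k] [Fintype k] [DecidableEq k]
    (q : ℕ) (hq : Fintype.card k = q) (hodd : Odd q)
    {n : ℕ} (M : Matrix (Fin n) (Fin n) ℤ)
    (hN : ∀ v : Fin n → ℤ, (2 : ℤ) • v ∈ LinearMap.range M.mulVecLin)
    (χ₂ : kˣ →* ℂˣ) (hχ₂ : orderOf χ₂ = 2)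
    (ψ : AddChar k ℂ) (f : (Fin n → kˣ) → k) :
    ∑ x : Fin n → kˣ, ψ (f (phiMfun M x)) =
      ∑ ε ∈ Efin M, ∑ x : Fin n → kˣ,
        ψ (f x) * ∏ i, ((χ₂ (x i) : ℂˣ) : ℂ) ^ ((ε i : ℕ)) := by
  classical
  -- multiplicativity of phiMfun
  have hhom : ∀ z w : Fin n → kˣ, phiMfun M (z * w) = phiMfun M z * phiMfun M w := by
    intro z w; funext i
    simp [phiMfun, mul_zpow, Finset.prod_mul_distrib]
  have hinv : ∀ z : Fin n → kˣ, phiMfun M z⁻¹ = (phiMfun M z)⁻¹ := by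
    intro z; funext i
    simp [phiMfun, inv_zpow, Finset.prod_inv_distrib]
  -- fibers over image points have equal cardinality
  have hfibeq : ∀ x y : Fin n → kˣ, (∃ z, phiMfun M z = x) → (∃ z, phiMfun M z = y) →
      (Finset.univ.filter fun z => phiMfun M z = x).card
        = (Finset.univ.filter fun z => phiMfun M z = y).card := by
    intro x y ⟨zx, hzx⟩ ⟨zy, hzy⟩
    refine Finset.card_nbij' (fun t => zy * zx⁻¹ * t) (fun s => zx * zy⁻¹ * s) ?_ ?_ ?_ ?_
    · intro t ht
      simp only [Finset.mem_coe, Finset.mem_filter, Finset.mem_univ, true_and] at ht ⊢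
      rw [hhom, hhom, hinv, ht, hzx, hzy]
      group
    · intro s hs
      simp only [Finset.mem_coe, Finset.mem_filter, Finset.mem_univ, true_and] at hs ⊢
      rw [hhom, hhom, hinv, hs, hzx, hzy]
      group
    · intro t _; group
    · intro s _; group
  -- off the image both quantities vanish
  have hNoff : ∀ x : Fin n → kˣ, (¬ ∃ z, phiMfun M z = x) →
      (Finset.univ.filter fun z => phiMfun M z = x).card = 0 := by
    intro x hx
    rw [Finset.card_eq_zero, Finset.filter_eq_empty_iff]
    intro z _
    exact fun h => hx ⟨z, h⟩
  have hSoff : ∀ x : Fin n → kˣ, (¬ ∃ z, phiMfun M z = x) →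
      ∑ ε ∈ Efin M, (∏ i, ((χ₂ (x i) : ℂˣ) : ℂ) ^ ((ε i : ℕ))) = 0 := by
    intro x hx
    have h1 : ¬ ∀ ε ∈ Efin M, (∏ i, ((χ₂ (x i) : ℂˣ) : ℂ) ^ ((ε i : ℕ))) = 1 := by
      intro h; exact hx (hsurj15 M χ₂ hχ₂ hN x h)
    push_neg at h1
    obtain ⟨ε₀, hε₀, hne⟩ := h1
    rcases htpm15 χ₂ hχ₂ x ε₀ with h | h
    · exact absurd h hne
    · exact hSzero15 M χ₂ hχ₂ x ε₀ hε₀ h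
  -- on the image the character sum is the cardinality of Efin
  have hSin : ∀ x : Fin n → kˣ, (∃ z, phiMfun M z = x) →
      ∑ ε ∈ Efin M, (∏ i, ((χ₂ (x i) : ℂˣ) : ℂ) ^ ((ε i : ℕ)))
        = ((Efin M).card : ℂ) := by
    intro x ⟨z, hz⟩
    have h1 : ∀ ε ∈ Efin M, (∏ i, ((χ₂ (x i) : ℂˣ) : ℂ) ^ ((ε i : ℕ))) = 1 := by
      intro ε hε
      rw [← hz]
      exact himage115 M χ₂ hχ₂ z ε hε
    rw [Finset.sum_congr rfl h1, Finset.sum_const, nsmul_eq_mul, mul_one]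
  -- total sums agree
  have hNsum : ∑ x : Fin n → kˣ, ((Finset.univ.filter fun z => phiMfun M z = x).card : ℂ)
      = (Fintype.card (Fin n → kˣ) : ℂ) := by
    have h1 : (Finset.univ : Finset (Fin n → kˣ)).card
        = ∑ x : Fin n → kˣ, (Finset.univ.filter fun z => phiMfun M z = x).card :=
      Finset.card_eq_sum_card_fiberwise (fun z _ => Finset.mem_univ (phiMfun M z))
    rw [← Nat.cast_sum, ← h1, Finset.card_univ]
  have hSsum : ∑ x : Fin n → kˣ,
      ∑ ε ∈ Efin M, (∏ i, ((χ₂ (x i) : ℂˣ) : ℂ) ^ ((ε i : ℕ)))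
      = (Fintype.card (Fin n → kˣ) : ℂ) := by
    rw [Finset.sum_comm]
    have hin : ∀ ε : Fin n → Fin 2,
        ∑ x : Fin n → kˣ, (∏ i, ((χ₂ (x i) : ℂˣ) : ℂ) ^ ((ε i : ℕ)))
          = ∏ i, ∑ u : kˣ, ((χ₂ u : ℂˣ) : ℂ) ^ ((ε i : ℕ)) :=
      fun ε => (Fintype.prod_sum fun i u => ((χ₂ u : ℂˣ) : ℂ) ^ ((ε i : ℕ))).symm
    have hsplit : ∀ ε ∈ Efin M,
        ∑ x : Fin n → kˣ, (∏ i, ((χ₂ (x i) : ℂˣ) : ℂ) ^ ((ε i : ℕ)))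
          = if ε = 0 then (Fintype.card (Fin n → kˣ) : ℂ) else 0 := by
      intro ε _
      rw [hin ε]
      by_cases h : ε = 0
      · subst h
        simp [Fintype.card_pi, Finset.card_univ]
      · have h2 : ∃ i, ε i ≠ 0 := by
          by_contra hc; push_neg at hc
          exact h (funext fun i => hc i)
        obtain ⟨i, hi⟩ := h2
        have h3 : (ε i : ℕ) = 1 := by omega
        rw [if_neg h]
        refine Finset.prod_eq_zero (Finset.mem_univ i) ?_
        rw [h3]
        simp only [pow_one]
        exact chi_sum_zero15 χ₂ hχ₂
    rw [Finset.sum_congr rfl hsplit, Finset.sum_ite_eq' (Efin M) 0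
      (fun _ => (Fintype.card (Fin n → kˣ) : ℂ)), if_pos (hE015 M)]
  -- pointwise identity
  have hpoint : ∀ x : Fin n → kˣ,
      ((Finset.univ.filter fun z => phiMfun M z = x).card : ℂ)
        = ∑ ε ∈ Efin M, (∏ i, ((χ₂ (x i) : ℂˣ) : ℂ) ^ ((ε i : ℕ))) := by
    intro x
    by_cases hx : ∃ z, phiMfun M z = x
    · rw [hSin x hx]
      -- split the global identity over the image
      set P : (Fin n → kˣ) → Prop := fun y => ∃ z, phiMfun M z = y with hP
      have hsplitN := Finset.sum_filter_add_sum_filter_not Finset.univ P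
        (fun y => ((Finset.univ.filter fun z => phiMfun M z = y).card : ℂ))
      have hsplitS := Finset.sum_filter_add_sum_filter_not Finset.univ P
        (fun y => ∑ ε ∈ Efin M, (∏ i, ((χ₂ (y i) : ℂˣ) : ℂ) ^ ((ε i : ℕ))))
      have hNoff' : ∑ y ∈ Finset.univ.filter (fun y => ¬ P y),
          ((Finset.univ.filter fun z => phiMfun M z = y).card : ℂ) = 0 := by
        refine Finset.sum_eq_zero fun y hy => ?_
        rw [Finset.mem_filter] at hy
        rw [hNoff y hy.2]
        simp
      have hSoff' : ∑ y ∈ Finset.univ.filter (fun y => ¬ P y),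
          (∑ ε ∈ Efin M, (∏ i, ((χ₂ (y i) : ℂˣ) : ℂ) ^ ((ε i : ℕ)))) = 0 := by
        refine Finset.sum_eq_zero fun y hy => ?_
        rw [Finset.mem_filter] at hy
        exact hSoff y hy.2
      have hNin' : ∑ y ∈ Finset.univ.filter P,
          ((Finset.univ.filter fun z => phiMfun M z = y).card : ℂ)
          = ((Finset.univ.filter P).card : ℂ)
            * ((Finset.univ.filter fun z => phiMfun M z = x).card : ℂ) := by
        rw [Finset.sum_congr rfl (fun y hy => ?_), Finset.sum_const, nsmul_eq_mul]
        rw [Finset.mem_filter] at hy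
        rw [hfibeq y x hy.2 hx]
      have hSin' : ∑ y ∈ Finset.univ.filter P,
          (∑ ε ∈ Efin M, (∏ i, ((χ₂ (y i) : ℂˣ) : ℂ) ^ ((ε i : ℕ))))
          = ((Finset.univ.filter P).card : ℂ) * ((Efin M).card : ℂ) := by
        rw [Finset.sum_congr rfl (fun y hy => ?_), Finset.sum_const, nsmul_eq_mul]
        rw [Finset.mem_filter] at hy
        exact hSin y hy.2
      have hglob : ((Finset.univ.filter P).card : ℂ)
            * ((Finset.univ.filter fun z => phiMfun M z = x).card : ℂ)
          = ((Finset.univ.filter P).card : ℂ) * ((Efin M).card : ℂ) := by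
        rw [← hNin', ← hSin']
        have e1 : ∑ y ∈ Finset.univ.filter P,
            ((Finset.univ.filter fun z => phiMfun M z = y).card : ℂ)
            = (Fintype.card (Fin n → kˣ) : ℂ) := by
          have := hsplitN
          rw [hNoff', add_zero] at this
          rw [this, hNsum]
        have e2 : ∑ y ∈ Finset.univ.filter P,
            (∑ ε ∈ Efin M, (∏ i, ((χ₂ (y i) : ℂˣ) : ℂ) ^ ((ε i : ℕ))))
            = (Fintype.card (Fin n → kˣ) : ℂ) := by
          have := hsplitS
          rw [hSoff', add_zero] at this
          rw [this, hSsum]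
        rw [e1, e2]
      have hPcard : ((Finset.univ.filter P).card : ℂ) ≠ 0 := by
        have hxP : x ∈ Finset.univ.filter P := by
          rw [Finset.mem_filter]
          exact ⟨Finset.mem_univ x, hx⟩
        have : 0 < (Finset.univ.filter P).card := Finset.card_pos.mpr ⟨x, hxP⟩
        exact_mod_cast Nat.pos_iff_ne_zero.mp this
      exact mul_left_cancel₀ hPcard hglob
    · rw [hNoff x hx, hSoff x hx]
      simp
  -- final assembly
  calc ∑ x : Fin n → kˣ, ψ (f (phiMfun M x))
      = ∑ x : Fin n → kˣ, ∑ z ∈ Finset.univ.filter fun z => phiMfun M z = x, ψ (f x) :=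
        (Finset.sum_fiberwise' Finset.univ (phiMfun M) (fun x => ψ (f x))).symm
    _ = ∑ x : Fin n → kˣ,
        ψ (f x) * ∑ ε ∈ Efin M, (∏ i, ((χ₂ (x i) : ℂˣ) : ℂ) ^ ((ε i : ℕ))) := by
        refine Finset.sum_congr rfl fun x _ => ?_
        rw [Finset.sum_const, nsmul_eq_mul, ← hpoint x, mul_comm]
    _ = ∑ ε ∈ Efin M, ∑ x : Fin n → kˣ,
        ψ (f x) * ∏ i, ((χ₂ (x i) : ℂˣ) : ℂ) ^ ((ε i : ℕ)) := by
        rw [Finset.sum_comm]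
        exact Finset.sum_congr rfl fun x _ => by rw [Finset.mul_sum]
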